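/- Let f, g, h: ℝ^n → ℝ ∪ {∞} be proper, convex and lsc and let 0 < γ < 1 < δ. Define Ψ(s,t) = g^γ(s) − f^δ(t) − h^{γδ/(δ−γ)}((δs − γt)/(δ − γ)) + (1/(2(δ−γ)))‖s − t‖². Then Ψ is differentiable on ℝ^n × ℝ^n, and one iteration u = prox_{(γδ/(δ−γ))h}((δs − γt)/(δ − γ)), v = prox_{γg}(s), z = prox_{δf}(t), s⁺ = s + λ(v − u), t⁺ = t + μ(u − z) satisfies (s⁺, t⁺) = (s, t) − (γλ∇_sΨ(s,t), δμ∇_tΨ(s,t)). -/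

import Mathlib

open scoped InnerProductSpace
open Metric Filter Topology InnerProductSpace
noncomputable section

/-- `ℝ^p` as a Euclidean space. -/
abbrev Euc (p : ℕ) := EuclideanSpace ℝ (Fin p)

variable {p : ℕ}

/-- `f : ℝ^p → ℝ ∪ {∞}` (modelled with `EReal` values never equal to `-∞`) is proper. -/
def ProperFun (f : Euc p → EReal) : Prop :=
  (∀ x, f x ≠ ⊥) ∧ (∃ x, f x ≠ ⊤)

/-- Convexity for extended-real-valued functions. -/
def ConvexFun (f : Euc p → EReal) : Prop :=
  ∀ x y : Euc p, ∀ t : ℝ, 0 ≤ t → t ≤ 1 →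
    f (t • x + (1 - t) • y) ≤ (t : EReal) * f x + ((1 - t : ℝ) : EReal) * f y

/-- The convex subdifferential `∂f(x)`. -/
def Subdiff (f : Euc p → EReal) (x : Euc p) : Set (Euc p) :=
  {v | ∀ z, f x + ((⟪v, z - x⟫_ℝ : ℝ) : EReal) ≤ f z}

/-- `u` minimizes `w ↦ f(w) + (1/(2γ))‖w − x‖²`. -/
def ProxObjMin (f : Euc p → EReal) (γ : ℝ) (x u : Euc p) : Prop :=
  ∀ w, f u + ((1/(2*γ) * ‖u - x‖^2 : ℝ) : EReal) ≤ f w + ((1/(2*γ) * ‖w - x‖^2 : ℝ) : EReal)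

/-- `u = prox_{γf}(x)`: `u` is the unique minimizer of `w ↦ f(w) + (1/(2γ))‖w − x‖²`. -/
def IsProxOf (f : Euc p → EReal) (γ : ℝ) (x u : Euc p) : Prop :=
  ProxObjMin f γ x u ∧ ∀ w, ProxObjMin f γ x w → w = u

/-- The Moreau envelope `f^γ(x) = inf_w { f(w) + (1/(2γ))‖w − x‖² }`, as an extended real. -/
def moreau (f : Euc p → EReal) (γ : ℝ) (x : Euc p) : EReal :=
  ⨅ w : Euc p, f w + ((1/(2*γ) * ‖w - x‖^2 : ℝ) : EReal)

/-- The (real-valued) Moreau envelope. -/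
def moreauR (f : Euc p → EReal) (γ : ℝ) (x : Euc p) : ℝ := (moreau f γ x).toReal

/-- The DC envelope `φ_γ = g^γ − h^γ`. -/
def dce (g h : Euc p → EReal) (γ : ℝ) (s : Euc p) : ℝ := moreauR g γ s - moreauR h γ s

/-- The DC function `φ = g − h`, with the convention `∞ − ∞ = ∞`. -/
def dcVal (g h : Euc p → EReal) (x : Euc p) : EReal :=
  if g x = ⊤ then ⊤ else g x - h x

/-- The function `Ψ(s,t) = g^γ(s) − f^δ(t) − h^{γδ/(δ−γ)}((δs − γt)/(δ − γ))
  + (1/(2(δ−γ)))‖s − t‖²`. -/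
def Psi (f g h : Euc p → EReal) (γ δ : ℝ) (s t : Euc p) : ℝ :=
  moreauR g γ s - moreauR f δ t
    - moreauR h (γ*δ/(δ-γ)) ((δ - γ)⁻¹ • (δ • s - γ • t))
    + 1/(2*(δ-γ)) * ‖s - t‖^2

lemma lsc_exists_min (K : Set (Euc p)) (hK : IsCompact K) (hne : K.Nonempty)
    (φ : Euc p → EReal) (hφ : LowerSemicontinuous φ) :
    ∃ u ∈ K, ∀ w ∈ K, φ u ≤ φ w := by
  obtain ⟨a, _, hta, hmem⟩ := exists_seq_tendsto_sInf (hne.image φ) (OrderBot.bddBelow _)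
  choose x hxK hx using fun n => (hmem n : a n ∈ φ '' K)
  obtain ⟨u, huK, ψ, hψ, hcv⟩ := hK.tendsto_subseq hxK
  refine ⟨u, huK, fun w hw => le_trans ?_ (sInf_le (Set.mem_image_of_mem φ hw))⟩
  by_contra hlt
  push_neg at hlt
  obtain ⟨m', hm1, hm2⟩ := exists_between hlt
  have hev : ∀ᶠ z in 𝓝 u, m' < φ z := hφ u m' hm2
  have h1 : Tendsto (fun k => φ (x (ψ k))) atTop (𝓝 (sInf (φ '' K))) := by
    have := hta.comp hψ.tendsto_atTop
    simpa [Function.comp_def, hx] using this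
  have h2 : ∀ᶠ k in atTop, φ (x (ψ k)) < m' := h1.eventually_lt_const hm1
  have h3 : ∀ᶠ k in atTop, m' < φ (x (ψ k)) := hcv.eventually hev
  obtain ⟨k, hk2, hk3⟩ := (h2.and h3).exists
  exact absurd (hk2.trans hk3) (lt_irrefl _)

lemma exists_affine_minorant (f : Euc p → EReal) (hp : ProperFun f) (hc : ConvexFun f)
    (hl : LowerSemicontinuous f) :
    ∃ c A : ℝ, 0 ≤ A ∧ ∀ w, ((c - A * ‖w‖ : ℝ) : EReal) ≤ f w := by
  obtain ⟨x0, hx0t⟩ := hp.2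
  set a0 := (f x0).toReal with ha0
  have hfx0 : f x0 = (a0 : EReal) := (EReal.coe_toReal hx0t (hp.1 x0)).symm
  -- bound on the closed unit ball around x0
  obtain ⟨u0, hu0K, hu0min⟩ := lsc_exists_min (closedBall x0 1) (isCompact_closedBall _ _)
    ⟨x0, by simp⟩ f hl
  set cb := (f u0).toReal with hcb
  have hball : ∀ w ∈ closedBall x0 1, (cb : EReal) ≤ f w := by
    intro w hw
    by_cases h : f u0 = ⊤
    · have : (⊤ : EReal) ≤ f w := h ▸ hu0min w hw
      exact le_trans le_top (le_of_eq (top_le_iff.mp this).symm)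
    · rw [hcb, EReal.coe_toReal h (hp.1 u0)]; exact hu0min w hw
  -- bound outside the unit ball
  have houter : ∃ c1 A1 : ℝ, ∀ w, 1 ≤ ‖w - x0‖ → ((c1 - A1 * ‖w - x0‖ : ℝ) : EReal) ≤ f w := by
    by_cases hS : (sphere x0 (1:ℝ)).Nonempty
    · obtain ⟨d0, hd0K, hd0min⟩ := lsc_exists_min (sphere x0 1) (isCompact_sphere _ _) hS f hl
      set csp := (f d0).toReal with hcsp
      have hsp : ∀ w ∈ sphere x0 (1:ℝ), (csp : EReal) ≤ f w := by
        intro w hw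
        by_cases h : f d0 = ⊤
        · have : (⊤ : EReal) ≤ f w := h ▸ hd0min w hw
          exact le_trans le_top (le_of_eq (top_le_iff.mp this).symm)
        · rw [hcsp, EReal.coe_toReal h (hp.1 d0)]; exact hd0min w hw
      refine ⟨a0, |csp - a0|, fun w hr1 => ?_⟩
      by_cases hwT : f w = ⊤
      · rw [hwT]; exact le_top
      set r := ‖w - x0‖ with hrdef
      have hr0 : (0:ℝ) < r := lt_of_lt_of_le one_pos hr1
      set τ := r⁻¹ with hτ
      have hτ0 : (0:ℝ) < τ := inv_pos.mpr hr0
      have hτ1 : τ ≤ 1 := by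
        rw [hτ]; exact inv_le_one_of_one_le₀ hr1
      have hrt : r * τ = 1 := mul_inv_cancel₀ hr0.ne'
      have hcv := hc w x0 τ hτ0.le hτ1
      have hmem : τ • w + (1 - τ) • x0 ∈ sphere x0 (1:ℝ) := by
        have heq : τ • w + (1 - τ) • x0 - x0 = τ • (w - x0) := by module
        rw [mem_sphere_iff_norm, heq, norm_smul, Real.norm_eq_abs, abs_of_pos hτ0, ← hrdef]
        rw [hτ]; exact inv_mul_cancel₀ hr0.ne'
      have hy : (csp : EReal) ≤ f (τ • w + (1 - τ) • x0) := hsp _ hmem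
      set b := (f w).toReal with hb
      have hfw : f w = (b : EReal) := (EReal.coe_toReal hwT (hp.1 w)).symm
      have hchain : (csp : EReal) ≤ ((τ * b + (1 - τ) * a0 : ℝ) : EReal) := by
        refine le_trans (le_trans hy hcv) ?_
        rw [hfx0, hfw]
        norm_cast
      rw [EReal.coe_le_coe_iff] at hchain
      rw [hfw, EReal.coe_le_coe_iff]
      have h2 : r * (τ * b + (1 - τ) * a0) = b + (r - 1) * a0 := by
        rw [hτ]; field_simp
      have h3 := mul_le_mul_of_nonneg_left hchain hr0.le
      rw [h2] at h3
      have h4 := mul_le_mul_of_nonneg_left (neg_abs_le (csp - a0)) hr0.le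
      nlinarith [h3, h4]
    · refine ⟨0, 0, fun w hr1 => absurd ?_ hS⟩
      have hr0 : (0:ℝ) < ‖w - x0‖ := lt_of_lt_of_le one_pos hr1
      refine ⟨x0 + ‖w - x0‖⁻¹ • (w - x0), ?_⟩
      rw [mem_sphere_iff_norm, add_sub_cancel_left, norm_smul, Real.norm_eq_abs,
        abs_of_pos (inv_pos.mpr hr0), inv_mul_cancel₀ hr0.ne']
  obtain ⟨c1, A1, hA1⟩ := houter
  set A := max A1 0 + 1 with hA
  have hA0 : (0:ℝ) < A := by positivity
  refine ⟨min cb c1 - A * ‖x0‖, A, hA0.le, fun w => ?_⟩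
  have htri : ‖w - x0‖ ≤ ‖w‖ + ‖x0‖ := norm_sub_le w x0
  by_cases hw : w ∈ closedBall x0 1
  · refine le_trans ?_ (hball w hw)
    rw [EReal.coe_le_coe_iff]
    nlinarith [norm_nonneg w, norm_nonneg x0, min_le_left cb c1]
  · have hr1 : 1 ≤ ‖w - x0‖ := by
      rw [mem_closedBall, dist_eq_norm] at hw; linarith [not_le.mp hw]
    refine le_trans ?_ (hA1 w hr1)
    rw [EReal.coe_le_coe_iff]
    have hle : A1 ≤ A := by rw [hA]; linarith [le_max_left A1 0]
    nlinarith [norm_nonneg w, norm_nonneg x0, min_le_right cb c1, norm_nonneg (w - x0)]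

lemma coercive_aux (M c A nw nx D r q : ℝ) (hr1 : 1 ≤ r)
    (h3 : (A + D + 1) * r ≤ q) (hDr : D ≤ D * r) (hMD : M - c + A * nx ≤ D)
    (h5 : A * nw ≤ A * r + A * nx) : M ≤ c - A * nw + q := by
  linarith

lemma exists_proxObjMin (f : Euc p → EReal) (hp : ProperFun f) (hc : ConvexFun f)
    (hl : LowerSemicontinuous f) {γ : ℝ} (hγ : 0 < γ) (x : Euc p) :
    ∃ u, ProxObjMin f γ x u := by
  obtain ⟨c, A, hA0, hmin⟩ := exists_affine_minorant f hp hc hl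
  obtain ⟨x0, hx0t⟩ := hp.2
  set M : ℝ := (f x0).toReal + 1/(2*γ) * ‖x0 - x‖^2 with hM
  have hfx0 : f x0 = ((f x0).toReal : EReal) := (EReal.coe_toReal hx0t (hp.1 x0)).symm
  set D : ℝ := |M - c + A * ‖x‖| with hD
  have hD0 : 0 ≤ D := abs_nonneg _
  set R : ℝ := max 1 (max (‖x0 - x‖) (2*γ*(A + D + 1))) with hR
  -- the objective function
  set F : Euc p → EReal := fun w => f w + ((1/(2*γ) * ‖w - x‖^2 : ℝ) : EReal) with hF
  have hFlsc : LowerSemicontinuous F := by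
    apply LowerSemicontinuous.add' hl
    · exact Continuous.lowerSemicontinuous (EReal.continuous_coe_iff.mpr
        (continuous_const.mul ((continuous_id.sub continuous_const).norm.pow 2)))
    · intro w
      exact EReal.continuousAt_add (Or.inr (EReal.coe_ne_bot _)) (Or.inr (EReal.coe_ne_top _))
  -- lower bound for F outside the ball
  have hout : ∀ w : Euc p, R ≤ ‖w - x‖ → ((M : ℝ) : EReal) ≤ F w := by
    intro w hr
    set r : ℝ := ‖w - x‖ with hr'
    have hr1 : (1:ℝ) ≤ r := le_trans (le_max_left _ _) hr
    have hr2 : 2*γ*(A + D + 1) ≤ r := le_trans (le_trans (le_max_right _ _) (le_max_right _ _)) hr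
    have hwnorm : ‖w‖ ≤ r + ‖x‖ := by
      calc ‖w‖ = ‖(w - x) + x‖ := by rw [sub_add_cancel]
      _ ≤ ‖w - x‖ + ‖x‖ := norm_add_le _ _
    have key : M ≤ (c - A * ‖w‖) + 1/(2*γ) * r^2 := by
      have h1 : 2*γ*((A + D + 1)*r) ≤ r^2 := by nlinarith [hr2, hr1]
      have h3 : (A + D + 1)*r ≤ 1/(2*γ)*r^2 := by
        have h2 : (A + D + 1)*r = (1/(2*γ))*(2*γ*((A + D + 1)*r)) := by field_simp
        rw [h2]
        exact mul_le_mul_of_nonneg_left h1 (by positivity)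
      have hDr : D ≤ D * r := le_mul_of_one_le_right hD0 hr1
      have hMD : M - c + A*‖x‖ ≤ D := le_abs_self _
      have h5 : A*‖w‖ ≤ A*r + A*‖x‖ := by nlinarith [mul_le_mul_of_nonneg_left hwnorm hA0]
      exact coercive_aux M c A ‖w‖ ‖x‖ D r _ hr1 h3 hDr hMD h5
    calc ((M : ℝ) : EReal) ≤ (((c - A * ‖w‖) + 1/(2*γ) * r^2 : ℝ) : EReal) :=
          EReal.coe_le_coe_iff.mpr key
    _ = ((c - A * ‖w‖ : ℝ) : EReal) + ((1/(2*γ) * r^2 : ℝ) : EReal) := by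
          rw [← EReal.coe_add]
    _ ≤ F w := add_le_add (hmin w) le_rfl
  -- minimize over the closed ball
  obtain ⟨u, huK, humin⟩ := lsc_exists_min (closedBall x R) (isCompact_closedBall _ _)
    ⟨x, mem_closedBall_self (le_trans zero_le_one (le_max_left _ _))⟩ F hFlsc
  refine ⟨u, fun w => ?_⟩
  by_cases hw : w ∈ closedBall x R
  · exact humin w hw
  · have hx0K : x0 ∈ closedBall x R := by
      rw [mem_closedBall, dist_eq_norm]
      exact le_trans (le_max_left _ _) (le_max_right _ _)
    have h1 : F u ≤ ((M : ℝ) : EReal) := by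
      refine le_trans (humin x0 hx0K) (le_of_eq ?_)
      rw [hF]; simp only; rw [hfx0, hM, EReal.coe_add]
    have h2 : R ≤ ‖w - x‖ := by
      rw [mem_closedBall, dist_eq_norm, not_le] at hw
      exact hw.le
    exact le_trans h1 (hout w h2)

lemma proxObjMin_ne_top {f : Euc p → EReal} (hp : ProperFun f) {γ : ℝ} {x u : Euc p}
    (hu : ProxObjMin f γ x u) : f u ≠ ⊤ := by
  obtain ⟨x0, hx0⟩ := hp.2
  intro hT
  have := hu x0
  rw [hT, EReal.top_add_coe] at this
  exact absurd this (EReal.add_lt_top hx0 (EReal.coe_ne_top _)).not_ge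

lemma moreau_eq_of_prox {f : Euc p → EReal} {γ : ℝ} {x u : Euc p}
    (hu : ProxObjMin f γ x u) :
    moreau f γ x = f u + ((1/(2*γ) * ‖u - x‖^2 : ℝ) : EReal) :=
  le_antisymm (iInf_le _ u) (le_iInf hu)

lemma moreauR_eq_of_prox {f : Euc p → EReal} (hp : ProperFun f) {γ : ℝ} {x u : Euc p}
    (hu : ProxObjMin f γ x u) :
    moreauR f γ x = (f u).toReal + 1/(2*γ) * ‖u - x‖^2 := by
  have hfu : f u = ((f u).toReal : EReal) :=
    (EReal.coe_toReal (proxObjMin_ne_top hp hu) (hp.1 u)).symm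
  rw [moreauR, moreau_eq_of_prox hu, hfu, ← EReal.coe_add, EReal.toReal_coe]
  simp

lemma prox_varineq {f : Euc p → EReal} (hp : ProperFun f) (hc : ConvexFun f) {γ : ℝ}
    (hγ : 0 < γ) {x u : Euc p} (hu : ProxObjMin f γ x u) (w : Euc p) (hw : f w ≠ ⊤) :
    (f u).toReal + γ⁻¹ * ⟪x - u, w - u⟫_ℝ ≤ (f w).toReal := by
  obtain ⟨A, hfu⟩ : ∃ A : ℝ, f u = (A : EReal) :=
    ⟨_, (EReal.coe_toReal (proxObjMin_ne_top hp hu) (hp.1 u)).symm⟩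
  obtain ⟨B, hfw⟩ : ∃ B : ℝ, f w = (B : EReal) := ⟨_, (EReal.coe_toReal hw (hp.1 w)).symm⟩
  have hAt : (f u).toReal = A := by rw [hfu, EReal.toReal_coe]
  have hBt : (f w).toReal = B := by rw [hfw, EReal.toReal_coe]
  rw [hAt, hBt]
  have key : ∀ t : ℝ, 0 < t → t ≤ 1 →
      A - B + γ⁻¹ * ⟪x - u, w - u⟫_ℝ ≤ t * (1/(2*γ)) * ‖w - u‖^2 := by
    intro t ht ht1
    have hcv := hc w u t ht.le ht1
    have hmin := hu (t • w + (1 - t) • u)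
    have hmt : t • w + (1 - t) • u - x = (u - x) + t • (w - u) := by module
    have hnorm : ‖t • w + (1 - t) • u - x‖^2
        = ‖u - x‖^2 + 2 * (t * ⟪u - x, w - u⟫_ℝ) + t^2 * ‖w - u‖^2 := by
      rw [hmt, norm_add_sq_real, real_inner_smul_right, norm_smul, Real.norm_eq_abs,
        mul_pow, sq_abs]
    have hchain : ((A + 1/(2*γ) * ‖u - x‖^2 : ℝ) : EReal)
        ≤ ((t * B + (1 - t) * A + 1/(2*γ) * ‖t • w + (1 - t) • u - x‖^2 : ℝ) : EReal) := by
      calc ((A + 1/(2*γ) * ‖u - x‖^2 : ℝ) : EReal)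
          = f u + ((1/(2*γ) * ‖u - x‖^2 : ℝ) : EReal) := by rw [hfu, ← EReal.coe_add]
        _ ≤ f (t • w + (1 - t) • u) + ((1/(2*γ) * ‖t • w + (1 - t) • u - x‖^2 : ℝ) : EReal) :=
            hmin
        _ ≤ ((t : ℝ) : EReal) * f w + ((1 - t : ℝ) : EReal) * f u
              + ((1/(2*γ) * ‖t • w + (1 - t) • u - x‖^2 : ℝ) : EReal) :=
            add_le_add hcv le_rfl
        _ = ((t * B + (1 - t) * A + 1/(2*γ) * ‖t • w + (1 - t) • u - x‖^2 : ℝ) : EReal) := by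
            rw [hfu, hfw, ← EReal.coe_mul, ← EReal.coe_mul, ← EReal.coe_add, ← EReal.coe_add]
    rw [EReal.coe_le_coe_iff, hnorm] at hchain
    have hginv : γ⁻¹ = 2 * (1/(2*γ)) := by field_simp
    have hexp : A - B + γ⁻¹ * ⟪x - u, w - u⟫_ℝ = A - B - γ⁻¹ * ⟪u - x, w - u⟫_ℝ := by
      have : (x - u : Euc p) = -(u - x) := by module
      rw [this, inner_neg_left]; ring
    rw [hexp, hginv]
    have hdiv : t * (A - B - 2 * (1/(2*γ)) * ⟪u - x, w - u⟫_ℝ)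
        ≤ t * (t * (1/(2*γ)) * ‖w - u‖^2) := by nlinarith [hchain]
    exact le_of_mul_le_mul_left hdiv ht
  have hd0 : A - B + γ⁻¹ * ⟪x - u, w - u⟫_ℝ ≤ 0 := by
    by_contra hpos
    push_neg at hpos
    set d := A - B + γ⁻¹ * ⟪x - u, w - u⟫_ℝ with hd
    have hcN : 0 ≤ (1/(2*γ)) * ‖w - u‖^2 := by positivity
    set t0 := min 1 (d / ((1/(2*γ)) * ‖w - u‖^2 + 1)) with ht0
    have ht0pos : 0 < t0 := lt_min one_pos (by positivity)
    have hk := key t0 ht0pos (min_le_left _ _)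
    have ht0le : t0 ≤ d / ((1/(2*γ)) * ‖w - u‖^2 + 1) := min_le_right _ _
    have h3 : t0 * ((1/(2*γ)) * ‖w - u‖^2 + 1) ≤ d := by
      calc t0 * ((1/(2*γ)) * ‖w - u‖^2 + 1)
          ≤ (d / ((1/(2*γ)) * ‖w - u‖^2 + 1)) * ((1/(2*γ)) * ‖w - u‖^2 + 1) :=
            mul_le_mul_of_nonneg_right ht0le (by positivity)
        _ = d := by field_simp
    have h2 : t0 * (1/(2*γ)) * ‖w - u‖^2 < d := by nlinarith [ht0pos]
    linarith [hk, h2]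
  linarith [hd0]

lemma prox_nonexpansive {f : Euc p → EReal} (hp : ProperFun f) (hc : ConvexFun f) {γ : ℝ}
    (hγ : 0 < γ) {x y u u' : Euc p} (hu : ProxObjMin f γ x u) (hu' : ProxObjMin f γ y u') :
    ‖u - u'‖ ≤ ‖x - y‖ := by
  have h1 := prox_varineq hp hc hγ hu u' (proxObjMin_ne_top hp hu')
  have h2 := prox_varineq hp hc hγ hu' u (proxObjMin_ne_top hp hu)
  have hkey : ⟪x - u, u' - u⟫_ℝ + ⟪y - u', u - u'⟫_ℝ ≤ 0 := by
    have hγinv : 0 < γ⁻¹ := inv_pos.mpr hγ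
    nlinarith [h1, h2]
  have hsplit : ⟪x - u, u' - u⟫_ℝ + ⟪y - u', u - u'⟫_ℝ
      = ⟪x - y, u' - u⟫_ℝ + ‖u - u'‖^2 := by
    have e1 : (y - u' : Euc p) = (y - x) + (x - u) + (u - u') := by module
    have e2 : (u - u' : Euc p) = -(u' - u) := by module
    rw [e1]
    rw [inner_add_left, inner_add_left]
    have e3 : ⟪x - u, u - u'⟫_ℝ = -⟪x - u, u' - u⟫_ℝ := by
      rw [e2, inner_neg_right]
    have e4 : ⟪y - x, u - u'⟫_ℝ = -⟪y - x, u' - u⟫_ℝ := by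
      rw [e2, inner_neg_right]
    have e5 : ⟪x - y, u' - u⟫_ℝ = -⟪y - x, u' - u⟫_ℝ := by
      have : (x - y : Euc p) = -(y - x) := by module
      rw [this, inner_neg_left]
    have e6 : ⟪u - u', u - u'⟫_ℝ = ‖u - u'‖^2 := real_inner_self_eq_norm_sq _
    rw [e3, e4, e5, e6]
    ring
  rw [hsplit] at hkey
  have hCS : -(‖x - y‖ * ‖u' - u‖) ≤ ⟪x - y, u' - u⟫_ℝ := by
    have habs := abs_real_inner_le_norm (x - y) (u' - u)
    linarith [neg_abs_le ⟪x - y, u' - u⟫_ℝ]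
  have hrev : ‖u' - u‖ = ‖u - u'‖ := norm_sub_rev _ _
  by_contra hgt
  push_neg at hgt
  have hpos : 0 < ‖u - u'‖ := lt_of_le_of_lt (norm_nonneg _) hgt
  nlinarith [hkey, hCS, hrev, hgt, hpos, mul_lt_mul_of_pos_right hgt hpos]

lemma hasGradientAt_of_quad {φ : Euc p → ℝ} {g x : Euc p} {C : ℝ} (hC : 0 ≤ C)
    (hb : ∀ y, |φ y - φ x - ⟪g, y - x⟫_ℝ| ≤ C * ‖y - x‖^2) : HasGradientAt φ g x := by
  rw [hasGradientAt_iff_isLittleO, Asymptotics.isLittleO_iff]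
  intro c hc
  have hev : ∀ᶠ y in 𝓝 x, ‖y - x‖ ≤ c/(C+1) := by
    have hmem : Metric.closedBall x (c/(C+1)) ∈ 𝓝 x :=
      Metric.closedBall_mem_nhds _ (by positivity)
    filter_upwards [hmem] with y hy
    rwa [Metric.mem_closedBall, dist_eq_norm] at hy
  filter_upwards [hev] with y hy
  have h1 := hb y
  have hkey : C * (c/(C+1)) ≤ c := by
    have heq : c - C * (c/(C+1)) = c/(C+1) := by field_simp; ring
    have : (0:ℝ) ≤ c/(C+1) := by positivity
    linarith
  have h2 : C * ‖y - x‖ ≤ C * (c/(C+1)) := mul_le_mul_of_nonneg_left hy hC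
  have h3 : C * ‖y - x‖ * ‖y - x‖ ≤ (C * (c/(C+1))) * ‖y - x‖ :=
    mul_le_mul_of_nonneg_right h2 (norm_nonneg _)
  have h4 : (C * (c/(C+1))) * ‖y - x‖ ≤ c * ‖y - x‖ :=
    mul_le_mul_of_nonneg_right hkey (norm_nonneg _)
  rw [Real.norm_eq_abs]
  calc |φ y - φ x - ⟪g, y - x⟫_ℝ| ≤ C * ‖y - x‖^2 := h1
    _ = C * ‖y - x‖ * ‖y - x‖ := by ring
    _ ≤ c * ‖y - x‖ := le_trans h3 h4

lemma moreau_hasGradientAt {f : Euc p → EReal} (hp : ProperFun f) (hc : ConvexFun f)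
    (hl : LowerSemicontinuous f) {γ : ℝ} (hγ : 0 < γ) {x u : Euc p}
    (hu : ProxObjMin f γ x u) :
    HasGradientAt (moreauR f γ) (γ⁻¹ • (x - u)) x := by
  apply hasGradientAt_of_quad (C := 1/(2*γ)) (by positivity)
  intro y
  obtain ⟨u', hu'⟩ := exists_proxObjMin f hp hc hl hγ y
  obtain ⟨A, hfu⟩ : ∃ A : ℝ, f u = (A : EReal) :=
    ⟨_, (EReal.coe_toReal (proxObjMin_ne_top hp hu) (hp.1 u)).symm⟩
  obtain ⟨A', hfu'⟩ : ∃ A' : ℝ, f u' = (A' : EReal) :=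
    ⟨_, (EReal.coe_toReal (proxObjMin_ne_top hp hu') (hp.1 u')).symm⟩
  have hAt : (f u).toReal = A := by rw [hfu, EReal.toReal_coe]
  have hAt' : (f u').toReal = A' := by rw [hfu', EReal.toReal_coe]
  have hMx : moreauR f γ x = A + 1/(2*γ) * ‖u - x‖^2 := by
    rw [moreauR_eq_of_prox hp hu, hAt]
  have hMy : moreauR f γ y = A' + 1/(2*γ) * ‖u' - y‖^2 := by
    rw [moreauR_eq_of_prox hp hu', hAt']
  -- the two minimality inequalities, in real form
  have hup : A' + 1/(2*γ) * ‖u' - y‖^2 ≤ A + 1/(2*γ) * ‖u - y‖^2 := by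
    have h := hu' u
    rw [hfu, hfu'] at h
    have h2 : ((A' + 1/(2*γ) * ‖u' - y‖^2 : ℝ) : EReal)
        ≤ ((A + 1/(2*γ) * ‖u - y‖^2 : ℝ) : EReal) := by
      rw [EReal.coe_add, EReal.coe_add]; exact h
    exact EReal.coe_le_coe_iff.mp h2
  have hdown : A + 1/(2*γ) * ‖u - x‖^2 ≤ A' + 1/(2*γ) * ‖u' - x‖^2 := by
    have h := hu u'
    rw [hfu, hfu'] at h
    have h2 : ((A + 1/(2*γ) * ‖u - x‖^2 : ℝ) : EReal)
        ≤ ((A' + 1/(2*γ) * ‖u' - x‖^2 : ℝ) : EReal) := by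
      rw [EReal.coe_add, EReal.coe_add]; exact h
    exact EReal.coe_le_coe_iff.mp h2
  have hne : ‖u - u'‖ ≤ ‖x - y‖ := prox_nonexpansive hp hc hγ hu hu'
  -- geometry identities
  have i1 : ‖u - y‖^2 = ‖u - x‖^2 + 2 * ⟪u - x, x - y⟫_ℝ + ‖x - y‖^2 := by
    have e : (u - y : Euc p) = (u - x) + (x - y) := by module
    rw [e, norm_add_sq_real]
  have i2 : ‖u' - x‖^2 = ‖u' - y‖^2 + 2 * ⟪u' - y, y - x⟫_ℝ + ‖y - x‖^2 := by
    have e : (u' - x : Euc p) = (u' - y) + (y - x) := by module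
    rw [e, norm_add_sq_real]
  have ismul : ⟪γ⁻¹ • (x - u), y - x⟫_ℝ = γ⁻¹ * ⟪x - u, y - x⟫_ℝ := real_inner_smul_left _ _ _
  have iflip : ⟪x - u, y - x⟫_ℝ = ⟪u - x, x - y⟫_ℝ := by
    have e1 : (x - u : Euc p) = -(u - x) := by module
    have e2 : (y - x : Euc p) = -(x - y) := by module
    rw [e1, e2, inner_neg_neg]
  have hnrev : ‖x - y‖ = ‖y - x‖ := norm_sub_rev _ _
  have hginv : γ⁻¹ = 2 * (1/(2*γ)) := by field_simp
  have j1 : ⟪u' - y, y - x⟫_ℝ = -⟪x - u, y - x⟫_ℝ - ‖y - x‖^2 - ⟪u - u', y - x⟫_ℝ := by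
    have e : (u' - y : Euc p) = -(x - u) - (y - x) - (u - u') := by module
    rw [e, inner_sub_left, inner_sub_left, inner_neg_left, real_inner_self_eq_norm_sq]
  have jCS : -(‖u - u'‖ * ‖y - x‖) ≤ ⟪u - u', y - x⟫_ℝ := by
    have habs := abs_real_inner_le_norm (u - u') (y - x)
    linarith [neg_abs_le ⟪u - u', y - x⟫_ℝ]
  have jprod : ‖u - u'‖ * ‖y - x‖ ≤ ‖y - x‖ * ‖y - x‖ :=
    mul_le_mul_of_nonneg_right (hnrev ▸ hne) (norm_nonneg _)
  -- combine
  rw [hMx, hMy, ismul, iflip]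
  rw [abs_le]
  constructor
  · -- lower bound
    rw [hginv]
    have hS : 0 ≤ -⟪u' - y, y - x⟫_ℝ - ⟪u - x, x - y⟫_ℝ := by
      rw [j1, iflip]
      nlinarith [jCS, jprod]
    have hmul : 0 ≤ 2 * (1/(2*γ)) * (-⟪u' - y, y - x⟫_ℝ - ⟪u - x, x - y⟫_ℝ) :=
      mul_nonneg (by positivity) hS
    have hI2c : 1/(2*γ) * ‖u' - x‖^2
        = 1/(2*γ) * ‖u' - y‖^2 + 2 * (1/(2*γ)) * ⟪u' - y, y - x⟫_ℝ + 1/(2*γ) * ‖y - x‖^2 := by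
      rw [i2]; ring
    linarith [hdown, hI2c, hmul]
  · -- upper bound
    rw [hginv]
    have hmain : A' + 1/(2*γ) * ‖u' - y‖^2 - (A + 1/(2*γ) * ‖u - x‖^2)
        ≤ 1/(2*γ) * (2 * ⟪u - x, x - y⟫_ℝ + ‖x - y‖^2) := by
      have : 1/(2*γ) * ‖u - y‖^2 - 1/(2*γ) * ‖u - x‖^2
          = 1/(2*γ) * (2 * ⟪u - x, x - y⟫_ℝ + ‖x - y‖^2) := by rw [i1]; ring
      linarith [hup]
    have hexpand : 1/(2*γ) * (2 * ⟪u - x, x - y⟫_ℝ + ‖x - y‖^2)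
        = 2 * (1/(2*γ)) * ⟪u - x, x - y⟫_ℝ + 1/(2*γ) * ‖y - x‖^2 := by
      rw [← hnrev]; ring
    linarith [hmain, hexpand.le, hexpand.ge]

lemma hasGradientAt_quad (c : ℝ) (t0 x : Euc p) :
    HasGradientAt (fun y => c * ‖y - t0‖^2) ((2*c) • (x - t0)) x := by
  apply hasGradientAt_of_quad (C := |c|) (abs_nonneg c)
  intro y
  have hid : ‖y - t0‖^2 = ‖y - x‖^2 + 2 * ⟪y - x, x - t0⟫_ℝ + ‖x - t0‖^2 := by
    have e : (y - t0 : Euc p) = (y - x) + (x - t0) := by module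
    rw [e, norm_add_sq_real]
  have hin : ⟪(2*c) • (x - t0), y - x⟫_ℝ = 2*c*⟪y - x, x - t0⟫_ℝ := by
    rw [real_inner_smul_left, real_inner_comm]
  have : c * ‖y - t0‖^2 - c * ‖x - t0‖^2 - ⟪(2*c) • (x - t0), y - x⟫_ℝ = c * ‖y - x‖^2 := by
    rw [hid, hin]; ring
  rw [this, abs_mul, abs_of_nonneg (by positivity : (0:ℝ) ≤ ‖y - x‖^2)]

lemma toDual_comp_smul (a : ℝ) (g : Euc p) :
    (toDual ℝ (Euc p) g).comp (a • ContinuousLinearMap.id ℝ (Euc p)) = toDual ℝ (Euc p) (a • g) := by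
  ext y
  simp [real_inner_smul_left, real_inner_smul_right, mul_comm]

/-- `Ψ` is differentiable, and one iteration
`u = prox_{(γδ/(δ−γ))h}((δs − γt)/(δ − γ))`, `v = prox_{γg}(s)`, `z = prox_{δf}(t)`,
`s⁺ = s + λ(v − u)`, `t⁺ = t + μ(u − z)` is the (scaled) gradient step
`(s⁺, t⁺) = (s, t) − (γλ∇_sΨ(s,t), δμ∇_tΨ(s,t))`. -/
theorem statement18
    (f g h : Euc p → EReal)
    (hf_proper : ProperFun f) (hf_convex : ConvexFun f) (hf_lsc : LowerSemicontinuous f)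
    (hg_proper : ProperFun g) (hg_convex : ConvexFun g) (hg_lsc : LowerSemicontinuous g)
    (hh_proper : ProperFun h) (hh_convex : ConvexFun h) (hh_lsc : LowerSemicontinuous h)
    (γ δ : ℝ) (hγ : 0 < γ) (hγ1 : γ < 1) (hδ : 1 < δ)
    (lam mu : ℝ)
    (s t u v z splus tplus : Euc p)
    (hu : IsProxOf h (γ*δ/(δ-γ)) ((δ - γ)⁻¹ • (δ • s - γ • t)) u)
    (hv : IsProxOf g γ s v)
    (hz : IsProxOf f δ t z)
    (hsplus : splus = s + lam • (v - u))
    (htplus : tplus = t + mu • (u - z)) :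
    Differentiable ℝ (fun q : Euc p × Euc p => Psi f g h γ δ q.1 q.2) ∧
      splus = s - (γ * lam) • gradient (fun s' => Psi f g h γ δ s' t) s ∧
      tplus = t - (δ * mu) • gradient (fun t' => Psi f g h γ δ s t') t := by
  have hδγ : (0:ℝ) < δ - γ := by linarith
  have hδ0 : (0:ℝ) < δ := by linarith
  have hρ : (0:ℝ) < γ*δ/(δ-γ) := by positivity
  set ρ : ℝ := γ*δ/(δ-γ) with hρdef
  set w : Euc p := (δ - γ)⁻¹ • (δ • s - γ • t) with hwdef
  -- differentiability of the envelopes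
  have Dg : Differentiable ℝ (moreauR g γ) := fun x => by
    obtain ⟨ux, hux⟩ := exists_proxObjMin g hg_proper hg_convex hg_lsc hγ x
    exact (moreau_hasGradientAt hg_proper hg_convex hg_lsc hγ hux).differentiableAt
  have Df : Differentiable ℝ (moreauR f δ) := fun x => by
    obtain ⟨ux, hux⟩ := exists_proxObjMin f hf_proper hf_convex hf_lsc hδ0 x
    exact (moreau_hasGradientAt hf_proper hf_convex hf_lsc hδ0 hux).differentiableAt
  have Dh : Differentiable ℝ (moreauR h ρ) := fun x => by
    obtain ⟨ux, hux⟩ := exists_proxObjMin h hh_proper hh_convex hh_lsc hρ x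
    exact (moreau_hasGradientAt hh_proper hh_convex hh_lsc hρ hux).differentiableAt
  have Dquad : ∀ (c : ℝ) (t0 : Euc p), Differentiable ℝ (fun y : Euc p => c * ‖y - t0‖^2) :=
    fun c t0 x => (hasGradientAt_quad c t0 x).differentiableAt
  refine ⟨?_, ?_, ?_⟩
  · -- joint differentiability
    simp only [Psi]
    have d1 : Differentiable ℝ (fun q : Euc p × Euc p => moreauR g γ q.1) :=
      Dg.comp differentiable_fst
    have d2 : Differentiable ℝ (fun q : Euc p × Euc p => moreauR f δ q.2) :=
      Df.comp differentiable_snd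
    have d3 : Differentiable ℝ
        (fun q : Euc p × Euc p => moreauR h ρ ((δ - γ)⁻¹ • (δ • q.1 - γ • q.2))) :=
      Dh.comp (((differentiable_fst.const_smul δ).sub
        (differentiable_snd.const_smul γ)).const_smul ((δ - γ)⁻¹))
    have d4 : Differentiable ℝ (fun q : Euc p × Euc p => 1/(2*(δ-γ)) * ‖q.1 - q.2‖^2) := by
      have heq : (fun q : Euc p × Euc p => 1/(2*(δ-γ)) * ‖q.1 - q.2‖^2)
          = (fun y : Euc p => 1/(2*(δ-γ)) * ‖y - 0‖^2) ∘ (fun q => q.1 - q.2) := by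
        funext q; simp
      rw [heq]
      exact (Dquad _ 0).comp (differentiable_fst.sub differentiable_snd)
    exact ((d1.sub d2).sub d3).add d4
  · -- the s-update
    have hγne : γ ≠ 0 := hγ.ne'
    have hδne : δ ≠ 0 := hδ0.ne'
    have hδγne : δ - γ ≠ 0 := hδγ.ne'
    have hEg : HasGradientAt (moreauR g γ) (γ⁻¹ • (s - v)) s :=
      moreau_hasGradientAt hg_proper hg_convex hg_lsc hγ hv.1
    have hEh : HasGradientAt (moreauR h ρ) (ρ⁻¹ • (w - u)) w :=
      moreau_hasGradientAt hh_proper hh_convex hh_lsc hρ hu.1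
    have haff : HasFDerivAt (fun s' : Euc p => (δ - γ)⁻¹ • (δ • s' - γ • t))
        (((δ - γ)⁻¹ * δ) • ContinuousLinearMap.id ℝ (Euc p)) s := by
      have heq : (fun s' : Euc p => (δ - γ)⁻¹ • (δ • s' - γ • t))
          = fun s' => ((δ - γ)⁻¹ * δ) • s' + (-((δ - γ)⁻¹ * γ)) • t := by
        funext s'; module
      rw [heq]
      exact ((hasFDerivAt_id s).const_smul ((δ - γ)⁻¹ * δ)).add_const _
    have hcomp : HasFDerivAt (fun s' : Euc p => moreauR h ρ ((δ - γ)⁻¹ • (δ • s' - γ • t)))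
        (toDual ℝ (Euc p) (((δ - γ)⁻¹ * δ) • (ρ⁻¹ • (w - u)))) s := by
      have hh := (hasGradientAt_iff_hasFDerivAt.mp hEh).comp s haff
      rwa [toDual_comp_smul] at hh
    have hq : HasGradientAt (fun s' : Euc p => 1/(2*(δ-γ)) * ‖s' - t‖^2)
        ((2*(1/(2*(δ-γ)))) • (s - t)) s := hasGradientAt_quad _ t s
    have htot : HasFDerivAt (fun s' => Psi f g h γ δ s' t)
        (toDual ℝ (Euc p) (γ⁻¹ • (s - v))
          - toDual ℝ (Euc p) (((δ - γ)⁻¹ * δ) • (ρ⁻¹ • (w - u)))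
          + toDual ℝ (Euc p) ((2*(1/(2*(δ-γ)))) • (s - t))) s := by
      simp only [Psi]
      exact (((hasGradientAt_iff_hasFDerivAt.mp hEg).sub_const _).sub hcomp).add
        (hasGradientAt_iff_hasFDerivAt.mp hq)
    have hdual : toDual ℝ (Euc p) (γ⁻¹ • (s - v))
          - toDual ℝ (Euc p) (((δ - γ)⁻¹ * δ) • (ρ⁻¹ • (w - u)))
          + toDual ℝ (Euc p) ((2*(1/(2*(δ-γ)))) • (s - t))
        = toDual ℝ (Euc p) (γ⁻¹ • (s - v) - ((δ - γ)⁻¹ * δ) • (ρ⁻¹ • (w - u))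
            + (2*(1/(2*(δ-γ)))) • (s - t)) := by
      rw [map_add, map_sub]
    have hGrad : HasGradientAt (fun s' => Psi f g h γ δ s' t)
        (γ⁻¹ • (s - v) - ((δ - γ)⁻¹ * δ) • (ρ⁻¹ • (w - u))
          + (2*(1/(2*(δ-γ)))) • (s - t)) s :=
      hasGradientAt_iff_hasFDerivAt.mpr (hdual ▸ htot)
    rw [hsplus, hGrad.gradient]
    have hws : w - s = (γ*(δ-γ)⁻¹) • (s - t) := by
      have h1 : (δ - γ) • (w - s) = (δ - γ) • ((γ*(δ-γ)⁻¹) • (s - t)) := by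
        rw [hwdef, smul_sub, smul_smul, mul_inv_cancel₀ hδγne, one_smul, smul_smul]
        have hsc : (δ-γ)*(γ*(δ-γ)⁻¹) = γ := by field_simp
        rw [hsc]
        module
      exact smul_right_injective (Euc p) hδγne h1
    have k1 : ((δ - γ)⁻¹ * δ) • (ρ⁻¹ • (w - u)) = γ⁻¹ • (w - u) := by
      rw [smul_smul]
      congr 1
      rw [hρdef]
      field_simp
    have k2 : (2*(1/(2*(δ-γ)))) • (s - t) = γ⁻¹ • (w - s) := by
      rw [hws, smul_smul]
      congr 1
      field_simp
    have hG : γ⁻¹ • (s - v) - ((δ - γ)⁻¹ * δ) • (ρ⁻¹ • (w - u)) + (2*(1/(2*(δ-γ)))) • (s - t)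
        = γ⁻¹ • (u - v) := by
      rw [k1, k2, ← smul_sub, ← smul_add]
      congr 1
      module
    rw [hG, smul_smul]
    have hsc2 : γ * lam * γ⁻¹ = lam := by field_simp
    rw [hsc2]
    module
  · -- the t-update
    have hγne : γ ≠ 0 := hγ.ne'
    have hδne : δ ≠ 0 := hδ0.ne'
    have hδγne : δ - γ ≠ 0 := hδγ.ne'
    have hEf : HasGradientAt (moreauR f δ) (δ⁻¹ • (t - z)) t :=
      moreau_hasGradientAt hf_proper hf_convex hf_lsc hδ0 hz.1
    have hEh : HasGradientAt (moreauR h ρ) (ρ⁻¹ • (w - u)) w :=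
      moreau_hasGradientAt hh_proper hh_convex hh_lsc hρ hu.1
    have haff : HasFDerivAt (fun t' : Euc p => (δ - γ)⁻¹ • (δ • s - γ • t'))
        (((δ - γ)⁻¹ * (-γ)) • ContinuousLinearMap.id ℝ (Euc p)) t := by
      have heq : (fun t' : Euc p => (δ - γ)⁻¹ • (δ • s - γ • t'))
          = fun t' => ((δ - γ)⁻¹ * (-γ)) • t' + ((δ - γ)⁻¹ * δ) • s := by
        funext t'; module
      rw [heq]
      exact ((hasFDerivAt_id t).const_smul ((δ - γ)⁻¹ * (-γ))).add_const _
    have hcomp : HasFDerivAt (fun t' : Euc p => moreauR h ρ ((δ - γ)⁻¹ • (δ • s - γ • t')))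
        (toDual ℝ (Euc p) (((δ - γ)⁻¹ * (-γ)) • (ρ⁻¹ • (w - u)))) t := by
      have hh := (hasGradientAt_iff_hasFDerivAt.mp hEh).comp t haff
      rwa [toDual_comp_smul] at hh
    have hqeq : (fun t' : Euc p => 1/(2*(δ-γ)) * ‖s - t'‖^2)
        = fun t' => 1/(2*(δ-γ)) * ‖t' - s‖^2 := by
      funext t'; rw [norm_sub_rev]
    have hq : HasGradientAt (fun t' : Euc p => 1/(2*(δ-γ)) * ‖s - t'‖^2)
        ((2*(1/(2*(δ-γ)))) • (t - s)) t := by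
      rw [hqeq]; exact hasGradientAt_quad _ s t
    have htot : HasFDerivAt (fun t' => Psi f g h γ δ s t')
        (-(toDual ℝ (Euc p) (δ⁻¹ • (t - z)))
          - toDual ℝ (Euc p) (((δ - γ)⁻¹ * (-γ)) • (ρ⁻¹ • (w - u)))
          + toDual ℝ (Euc p) ((2*(1/(2*(δ-γ)))) • (t - s))) t := by
      simp only [Psi]
      exact (((hasGradientAt_iff_hasFDerivAt.mp hEf).const_sub _).sub hcomp).add
        (hasGradientAt_iff_hasFDerivAt.mp hq)
    have hdual : -(toDual ℝ (Euc p) (δ⁻¹ • (t - z)))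
          - toDual ℝ (Euc p) (((δ - γ)⁻¹ * (-γ)) • (ρ⁻¹ • (w - u)))
          + toDual ℝ (Euc p) ((2*(1/(2*(δ-γ)))) • (t - s))
        = toDual ℝ (Euc p) (-(δ⁻¹ • (t - z)) - ((δ - γ)⁻¹ * (-γ)) • (ρ⁻¹ • (w - u))
            + (2*(1/(2*(δ-γ)))) • (t - s)) := by
      rw [map_add, map_sub, map_neg]
    have hGrad : HasGradientAt (fun t' => Psi f g h γ δ s t')
        (-(δ⁻¹ • (t - z)) - ((δ - γ)⁻¹ * (-γ)) • (ρ⁻¹ • (w - u))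
          + (2*(1/(2*(δ-γ)))) • (t - s)) t :=
      hasGradientAt_iff_hasFDerivAt.mpr (hdual ▸ htot)
    rw [htplus, hGrad.gradient]
    have hwt : w - t = (δ*(δ-γ)⁻¹) • (s - t) := by
      have h1 : (δ - γ) • (w - t) = (δ - γ) • ((δ*(δ-γ)⁻¹) • (s - t)) := by
        rw [hwdef, smul_sub, smul_smul, mul_inv_cancel₀ hδγne, one_smul, smul_smul]
        have hsc : (δ-γ)*(δ*(δ-γ)⁻¹) = δ := by field_simp
        rw [hsc]
        module
      exact smul_right_injective (Euc p) hδγne h1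
    have k1 : ((δ - γ)⁻¹ * (-γ)) • (ρ⁻¹ • (w - u)) = -(δ⁻¹ • (w - u)) := by
      rw [smul_smul, ← neg_smul]
      congr 1
      rw [hρdef]
      field_simp
    have k2 : (2*(1/(2*(δ-γ)))) • (t - s) = δ⁻¹ • (t - w) := by
      have htw : t - w = (δ*(δ-γ)⁻¹) • (t - s) := by
        have : t - w = -(w - t) := by module
        rw [this, hwt]
        module
      rw [htw, smul_smul]
      congr 1
      field_simp
    have hG : -(δ⁻¹ • (t - z)) - ((δ - γ)⁻¹ * (-γ)) • (ρ⁻¹ • (w - u))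
          + (2*(1/(2*(δ-γ)))) • (t - s)
        = δ⁻¹ • (z - u) := by
      rw [k1, k2, sub_neg_eq_add, ← smul_neg, ← smul_add, ← smul_add]
      congr 1
      module
    rw [hG, smul_smul]
    have hsc2 : δ * mu * δ⁻¹ = mu := by field_simp
    rw [hsc2]
    module
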